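/- Corollary (failure of stable stretching for u^L = (-x1, x2, 0)): for the curve η^L(t) = (r e^t, r e^{-t}, x3) with r > 0, the quantity ∂_z(κ |∂_t η^L|²) = 2κ ∂_t|∂_t η^L| + (∂_z κ)|∂_t η^L|² equals -tanh(2t)/cosh(2t), which is nonzero whenever t ≠ 0. -/

import Mathlib

/-- Corollary: failure of stable stretching for
`u^L = (-x1, x2, 0)`: for `η^L(t) = (r e^t, r e^{-t}, x3)` with `r > 0`,
`∂_z(κ |∂_t η^L|²) = 2 κ ∂_t|∂_t η^L| + (∂_z κ) |∂_t η^L|²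
  = -tanh(2t)/cosh(2t)`, which is nonzero whenever `t ≠ 0`. -/
theorem failure_of_stable_stretching
    (r : ℝ) (hr : 0 < r) :
    ∀ t : ℝ,
      2 * (1 / (Real.sqrt 2 * r * (Real.cosh (2 * t)) ^ ((3 : ℝ) / 2)))
          * (Real.sqrt 2 * r * Real.sinh (2 * t) / Real.sqrt (Real.cosh (2 * t)))
        + (-3 * Real.tanh (2 * t) / (2 * r ^ 2 * (Real.cosh (2 * t)) ^ 2))
          * (2 * r ^ 2 * Real.cosh (2 * t))
        = -Real.tanh (2 * t) / Real.cosh (2 * t) ∧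
      (t ≠ 0 → -Real.tanh (2 * t) / Real.cosh (2 * t) ≠ 0) := by
  intro t
  have hc : 0 < Real.cosh (2 * t) := Real.cosh_pos _
  have hcs : 0 < Real.sqrt (Real.cosh (2 * t)) := Real.sqrt_pos.mpr hc
  have h2 : (0:ℝ) < Real.sqrt 2 := Real.sqrt_pos.mpr (by norm_num)
  have hpow : (Real.cosh (2 * t)) ^ ((3 : ℝ) / 2)
      = Real.cosh (2 * t) * Real.sqrt (Real.cosh (2 * t)) := by
    rw [show (3:ℝ)/2 = 1 + 1/2 by norm_num, Real.rpow_add hc, Real.rpow_one,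
      ← Real.sqrt_eq_rpow]
  constructor
  · rw [hpow, Real.tanh_eq_sinh_div_cosh]
    have hsq : Real.sqrt (Real.cosh (2 * t)) * Real.sqrt (Real.cosh (2 * t))
        = Real.cosh (2 * t) := Real.mul_self_sqrt hc.le
    field_simp
    linear_combination (-2 * Real.sinh (2 * t)) * hsq
  · intro ht
    have hs : Real.sinh (2 * t) ≠ 0 := by
      simpa using Real.sinh_ne_zero.mpr (by simpa using mul_ne_zero two_ne_zero ht)
    have htanh : Real.tanh (2 * t) ≠ 0 := by
      rw [Real.tanh_eq_sinh_div_cosh]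
      exact div_ne_zero hs hc.ne'
    exact div_ne_zero (neg_ne_zero.mpr htanh) hc.ne'
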